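/- Polynomials f₁,…,fₙ ∈ k[x₁,…,xₙ], with k of characteristic zero, are algebraically independent over k if their Jacobian determinant J(f₁,…,fₙ) = det(∂fᵢ/∂xⱼ) is nonzero. -/

import Mathlib

open MvPolynomial Matrix

/-- Coefficient formula for the partial derivative. -/
lemma coeff_pderiv_aux {σ : Type*} [DecidableEq σ] {R : Type*} [CommSemiring R]
    (i : σ) (m : σ →₀ ℕ) (P : MvPolynomial σ R) :
    coeff m (pderiv i P) = (m i + 1 : ℕ) * coeff (m + Finsupp.single i 1) P := by
  induction P using MvPolynomial.induction_on' with
  | add p q hp hq => simp [hp, hq, mul_add]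
  | monomial s a =>
    rw [pderiv_monomial, coeff_monomial, coeff_monomial]
    by_cases h2 : s = m + Finsupp.single i 1
    · subst h2
      have h3 : m + Finsupp.single i 1 - Finsupp.single i 1 = m :=
        add_tsub_cancel_right _ _
      have h4 : ((m + Finsupp.single i 1 : σ →₀ ℕ)) i = m i + 1 := by
        rw [Finsupp.add_apply, Finsupp.single_eq_same]
      rw [if_pos h3, h4]
      simp only [if_true]
      push_cast
      ring
    · rw [if_neg h2, mul_zero]
      by_cases h5 : s i = 0
      · simp [h5]
      · have h6 : s - Finsupp.single i 1 ≠ m := by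
          intro h
          apply h2
          ext j
          have := DFunLike.congr_fun h j
          simp only [Finsupp.tsub_apply, Finsupp.single_apply] at this
          simp only [Finsupp.coe_add, Pi.add_apply, Finsupp.single_apply]
          by_cases hji : i = j
          · subst hji; simp at this ⊢; omega
          · simp [hji] at this ⊢; omega
        rw [if_neg h6]

/-- Chain rule for `aeval` into a polynomial ring. -/
lemma pderiv_aeval_chain {k : Type*} [Field k] {n : ℕ}
    (f : Fin n → MvPolynomial (Fin n) k) (P : MvPolynomial (Fin n) k) (j : Fin n) :
    pderiv j (aeval f P) = ∑ i, aeval f (pderiv i P) * pderiv j (f i) := by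
  classical
  induction P using MvPolynomial.induction_on with
  | C a => simp
  | add p q hp hq => simp only [map_add, hp, hq, Finset.sum_add_distrib, add_mul]
  | mul_X p i hp =>
    have h1 : ∀ i' : Fin n, aeval (R := k) f (pderiv i' (p * X i)) * pderiv j (f i')
        = aeval (R := k) f (pderiv i' p) * pderiv j (f i') * f i
          + aeval (R := k) f p * (aeval (R := k) f (pderiv i' (X i)) * pderiv j (f i')) := by
      intro i'
      rw [pderiv_mul]
      rw [_root_.map_add, _root_.map_mul, _root_.map_mul, aeval_X]
      ring
    rw [_root_.map_mul, aeval_X, pderiv_mul, hp]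
    rw [Finset.sum_congr rfl fun i' _ => h1 i', Finset.sum_add_distrib]
    congr 1
    · rw [Finset.sum_mul]
    · rw [← Finset.mul_sum]
      congr 1
      rw [Finset.sum_eq_single i]
      · simp
      · intro b _ hb
        rw [pderiv_X_of_ne (Ne.symm hb)]
        simp
      · simp

theorem jacobian_criterion (k : Type*) [Field k] [CharZero k] (n : ℕ)
    (f : Fin n → MvPolynomial (Fin n) k)
    (hJ : Matrix.det (fun i j : Fin n => MvPolynomial.pderiv j (f i)) ≠ 0) :
    AlgebraicIndependent k f := by
  classical
  set M : Matrix (Fin n) (Fin n) (MvPolynomial (Fin n) k) :=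
    fun i j => pderiv j (f i) with hM
  have key : ∀ d (P : MvPolynomial (Fin n) k), P.totalDegree ≤ d → aeval f P = 0 → P = 0 := by
    intro d
    induction d with
    | zero =>
      intro P hdeg hzero
      have hdeg0 : P.totalDegree = 0 := Nat.le_zero.mp hdeg
      have hPC : P = C (coeff 0 P) := by
        ext m
        rcases eq_or_ne m 0 with rfl | hm
        · simp
        · have hall := (totalDegree_eq_zero_iff _ P).mp hdeg0
          have hns : m ∉ P.support := fun hs => hm (Finsupp.ext fun x => hall m hs x)
          rw [MvPolynomial.notMem_support_iff.mp hns, coeff_C, if_neg (Ne.symm hm)]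
      rw [hPC] at hzero ⊢
      rw [aeval_C, MvPolynomial.algebraMap_eq, C_eq_zero] at hzero
      rw [hzero, map_zero]
    | succ d ih =>
      intro P hdeg hzero
      -- the evaluated partial derivatives form a vector killed by M
      set v : Fin n → MvPolynomial (Fin n) k := fun i => aeval f (pderiv i P) with hv
      have hrow : v ᵥ* M = 0 := by
        funext j
        have h := congrArg (pderiv j) hzero
        rw [pderiv_aeval_chain, map_zero] at h
        simpa [Matrix.vecMul, dotProduct, hM, hv] using h
      have hdet : ∀ i, M.det * v i = 0 := by
        intro i
        have h2 : ((v ᵥ* M) ᵥ* M.adjugate) i = 0 := by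
          rw [hrow, Matrix.zero_vecMul]; rfl
        rw [Matrix.vecMul_vecMul, Matrix.mul_adjugate] at h2
        simpa [Matrix.vecMul, dotProduct, Matrix.one_apply, mul_comm] using h2
      have hveval : ∀ i, aeval f (pderiv i P) = 0 := by
        intro i
        have := hdet i
        rcases mul_eq_zero.mp this with h | h
        · exact absurd h hJ
        · exact h
      -- partial derivatives have smaller total degree
      have hdegp : ∀ i : Fin n, (pderiv i P).totalDegree ≤ d := by
        intro i
        apply Finset.sup_le
        intro m hm
        have hc : coeff (m + Finsupp.single i 1) P ≠ 0 := by
          intro h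
          rw [MvPolynomial.mem_support_iff, coeff_pderiv_aux, h, mul_zero] at hm
          exact hm rfl
        have hle := MvPolynomial.le_totalDegree (MvPolynomial.mem_support_iff.mpr hc)
        have hsum : (m + Finsupp.single i 1).sum (fun _ e => e)
            = m.sum (fun _ e => e) + 1 := by
          rw [Finsupp.sum_add_index' (fun _ => rfl) (fun _ _ _ => rfl),
            Finsupp.sum_single_index rfl]
        rw [hsum] at hle
        clear hm hc
        omega
      have hpz : ∀ i, pderiv i P = 0 := fun i => ih _ (hdegp i) (hveval i)
      -- char zero: all partials vanish ⇒ constant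
      have hcoeff : ∀ (m : Fin n →₀ ℕ) (i : Fin n), m i ≠ 0 → coeff m P = 0 := by
        intro m i hmi
        have hmdecomp : m = (m - Finsupp.single i 1) + Finsupp.single i 1 := by
          ext j
          rcases eq_or_ne i j with rfl | hji
          · simp only [Finsupp.coe_add, Pi.add_apply, Finsupp.coe_tsub, Pi.sub_apply,
              Finsupp.single_eq_same]
            omega
          · simp [Finsupp.single_apply, hji]
        have h := coeff_pderiv_aux i (m - Finsupp.single i 1) P
        rw [hpz i, coeff_zero, ← hmdecomp] at h
        have hne : ((((m - Finsupp.single i 1 : Fin n →₀ ℕ)) i + 1 : ℕ) : k) ≠ 0 :=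
          Nat.cast_ne_zero.mpr (by omega)
        exact (mul_eq_zero.mp h.symm).resolve_left hne
      have hdeg0 : P.totalDegree = 0 := by
        rw [totalDegree_eq_zero_iff]
        intro m hm x
        by_contra hx
        exact (MvPolynomial.mem_support_iff.mp hm) (hcoeff m x hx)
      exact ih P (hdeg0 ▸ Nat.zero_le d) hzero
  rw [algebraicIndependent_iff]
  intro p hp
  exact key p.totalDegree p le_rfl hp
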